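/- Let X and Y be independent absolutely continuous random variables with joint density f_{X,Y}(x,y) = f_X(x) f_Y(y). Define bivariate weighted varextropy VJ^w(X,Y) = (1/16)[∬ x² y² f_{X,Y}(x,y)³ dx dy − (∬ x y f_{X,Y}(x,y)² dx dy)²]. Then VJ^w(X,Y) = VJ^w(X)·[VJ^w(Y) + (J^w(Y))²] + (J^w(X))²·VJ^w(Y), where J^w(Z) = −(1/2)∫ z f_Z(z)² dz and VJ^w(Z) = (1/4)∫ z² f_Z(z)³ dz − (J^w(Z))². -/
import Mathlib


open MeasureTheory

/-- For independent `X, Y` with joint density `f_{X,Y}(x,y) = f_X(x) f_Y(y)`,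
the bivariate weighted varextropy
`VJʷ(X,Y) = (1/16)[∬ x²y² f³ − (∬ xy f²)²]` satisfies
`VJʷ(X,Y) = VJʷ(X)[VJʷ(Y) + Jʷ(Y)²] + Jʷ(X)²·VJʷ(Y)`, where
`Jʷ(Z) = −(1/2)∫ z f_Z(z)² dz` and `VJʷ(Z) = (1/4)∫ z² f_Z(z)³ dz − Jʷ(Z)²`. -/
theorem bivariate_weighted_varextropy_indep
    (fX fY : ℝ → ℝ)
    (h1 : Integrable (fun x : ℝ => x^2 * (fX x)^3))
    (h2 : Integrable (fun x : ℝ => x * (fX x)^2))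
    (h3 : Integrable (fun y : ℝ => y^2 * (fY y)^3))
    (h4 : Integrable (fun y : ℝ => y * (fY y)^2)) :
    (1/16 : ℝ) * ((∫ p : ℝ × ℝ, p.1^2 * p.2^2 * (fX p.1 * fY p.2)^3)
        - (∫ p : ℝ × ℝ, p.1 * p.2 * (fX p.1 * fY p.2)^2)^2)
    = ((1/4 : ℝ) * (∫ x : ℝ, x^2 * (fX x)^3) - (-(1/2 : ℝ) * ∫ x : ℝ, x * (fX x)^2)^2)
        * (((1/4 : ℝ) * (∫ y : ℝ, y^2 * (fY y)^3)
            - (-(1/2 : ℝ) * ∫ y : ℝ, y * (fY y)^2)^2)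
          + (-(1/2 : ℝ) * ∫ y : ℝ, y * (fY y)^2)^2)
      + (-(1/2 : ℝ) * ∫ x : ℝ, x * (fX x)^2)^2
        * ((1/4 : ℝ) * (∫ y : ℝ, y^2 * (fY y)^3)
            - (-(1/2 : ℝ) * ∫ y : ℝ, y * (fY y)^2)^2) := by
  have hA : (∫ p : ℝ × ℝ, p.1^2 * p.2^2 * (fX p.1 * fY p.2)^3)
      = (∫ x : ℝ, x^2 * (fX x)^3) * (∫ y : ℝ, y^2 * (fY y)^3) := by
    have h : (fun p : ℝ × ℝ => p.1^2 * p.2^2 * (fX p.1 * fY p.2)^3)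
        = fun p : ℝ × ℝ => (p.1^2 * (fX p.1)^3) * (p.2^2 * (fY p.2)^3) := by
      funext p; ring
    rw [h, Measure.volume_eq_prod]
    exact integral_prod_mul (fun x : ℝ => x^2 * (fX x)^3) (fun y : ℝ => y^2 * (fY y)^3)
  have hB : (∫ p : ℝ × ℝ, p.1 * p.2 * (fX p.1 * fY p.2)^2)
      = (∫ x : ℝ, x * (fX x)^2) * (∫ y : ℝ, y * (fY y)^2) := by
    have h : (fun p : ℝ × ℝ => p.1 * p.2 * (fX p.1 * fY p.2)^2)
        = fun p : ℝ × ℝ => (p.1 * (fX p.1)^2) * (p.2 * (fY p.2)^2) := by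
      funext p; ring
    rw [h, Measure.volume_eq_prod]
    exact integral_prod_mul (fun x : ℝ => x * (fX x)^2) (fun y : ℝ => y * (fY y)^2)
  rw [hA, hB]; ring
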